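/- Let p be an odd prime. For every real number α, the following two identities hold: (1/2)·[(1 + e^{ipα})·∏_{k=0}^{p−1}(e^{i(α + 2kπ/p)} + 1) + (1 − e^{ipα})·∏_{k=0}^{p−1}(e^{i(α + 2kπ/p)} − 1)] = 2e^{ipα}, and (−1/2)·[(1 − e^{ipα})·∏_{k=0}^{p−1}(e^{i(α + 2kπ/p)} + 1) + (1 + e^{ipα})·∏_{k=0}^{p−1}(e^{i(α + 2kπ/p)} − 1)] = 0. (This is the semantic content of the rewritten cyclotomic supplementarity rule SUP_p: the vector with these two entries equals (2e^{ipα}, 0).) -/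

import Mathlib

open Finset Complex

lemma prod_z_sub_pow {n : ℕ} (hn : 0 < n) {ζ : ℂ} (hζ : IsPrimitiveRoot ζ n) (z : ℂ) :
    ∏ k ∈ Finset.range n, (z - ζ ^ k) = z ^ n - 1 := by
  have h := congrArg (Polynomial.eval z) (Polynomial.X_pow_sub_one_eq_prod (R := ℂ) hn hζ)
  simp only [Polynomial.eval_sub, Polynomial.eval_pow, Polynomial.eval_X, Polynomial.eval_one,
    Polynomial.eval_prod, Polynomial.eval_C] at h
  have key : ∏ k ∈ Finset.range n, (z - ζ ^ k)
      = ∏ μ ∈ Polynomial.nthRootsFinset n (1 : ℂ), (z - μ) := by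
    refine Finset.prod_nbij (fun k => ζ ^ k) ?_ ?_ ?_ ?_
    · intro k _
      exact (Polynomial.mem_nthRootsFinset hn (1 : ℂ)).2
        (by rw [← pow_mul, mul_comm, pow_mul, hζ.pow_eq_one, one_pow])
    · exact hζ.injOn_pow
    · intro μ hμ
      haveI : NeZero n := ⟨hn.ne'⟩
      obtain ⟨i, hi, hμi⟩ := hζ.eq_pow_of_pow_eq_one ((Polynomial.mem_nthRootsFinset hn (1 : ℂ)).1 hμ)
      exact ⟨i, Finset.mem_coe.mpr (Finset.mem_range.mpr hi), hμi⟩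
    · intro k _
      rfl
  rw [key, h]

theorem sup_rule_semantics (p : ℕ) (hp : Nat.Prime p) (hodd : Odd p) (α : ℝ) :
    ((1 : ℂ) / 2 *
        ((1 + Complex.exp (Complex.I * ((p : ℂ) * (α : ℂ)))) *
            ∏ k ∈ Finset.range p,
              (Complex.exp (Complex.I * ((α : ℂ) + 2 * (k : ℂ) * (Real.pi : ℂ) / (p : ℂ))) + 1) +
          (1 - Complex.exp (Complex.I * ((p : ℂ) * (α : ℂ)))) *
            ∏ k ∈ Finset.range p,
              (Complex.exp (Complex.I * ((α : ℂ) + 2 * (k : ℂ) * (Real.pi : ℂ) / (p : ℂ))) - 1)) =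
      2 * Complex.exp (Complex.I * ((p : ℂ) * (α : ℂ)))) ∧
    ((-1 : ℂ) / 2 *
        ((1 - Complex.exp (Complex.I * ((p : ℂ) * (α : ℂ)))) *
            ∏ k ∈ Finset.range p,
              (Complex.exp (Complex.I * ((α : ℂ) + 2 * (k : ℂ) * (Real.pi : ℂ) / (p : ℂ))) + 1) +
          (1 + Complex.exp (Complex.I * ((p : ℂ) * (α : ℂ)))) *
            ∏ k ∈ Finset.range p,
              (Complex.exp (Complex.I * ((α : ℂ) + 2 * (k : ℂ) * (Real.pi : ℂ) / (p : ℂ))) - 1)) =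
      0) := by
  have hp0 : 0 < p := hp.pos
  have hpc : (p : ℂ) ≠ 0 := Nat.cast_ne_zero.mpr hp0.ne'
  set ζ : ℂ := Complex.exp (2 * Real.pi * Complex.I / p) with hζdef
  have hζ : IsPrimitiveRoot ζ p := Complex.isPrimitiveRoot_exp p hp0.ne'
  set z : ℂ := Complex.exp (Complex.I * α) with hzdef
  set w : ℂ := Complex.exp (Complex.I * ((p : ℂ) * α)) with hwdef
  -- rewrite each factor
  have hterm : ∀ k : ℕ,
      Complex.exp (Complex.I * ((α : ℂ) + 2 * (k : ℂ) * (Real.pi : ℂ) / (p : ℂ))) = z * ζ ^ k := by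
    intro k
    rw [hzdef, hζdef, ← Complex.exp_nat_mul, ← Complex.exp_add]
    congr 1
    field_simp
  have hzp : z ^ p = w := by
    rw [hzdef, hwdef, ← Complex.exp_nat_mul]
    ring_nf
  -- minus product
  have hζinv : IsPrimitiveRoot ζ⁻¹ p := hζ.inv
  have hunit : ζ ≠ 0 := by
    intro h
    exact one_ne_zero (by rw [← hζ.pow_eq_one, h, zero_pow hp0.ne'])
  have hprodζ : ∏ k ∈ Finset.range p, ζ ^ k = 1 := by
    rw [Finset.prod_pow_eq_pow_sum, Finset.sum_range_id]
    obtain ⟨m, hm⟩ := hodd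
    have h2 : p - 1 = 2 * m := by omega
    have h3 : p * (p - 1) / 2 = p * m := by
      rw [h2, show p * (2 * m) = 2 * (p * m) from by ring,
        Nat.mul_div_cancel_left _ (by norm_num : 0 < 2)]
    rw [h3, pow_mul, hζ.pow_eq_one, one_pow]
  have hminus : ∀ y : ℂ, ∏ k ∈ Finset.range p, (y * ζ ^ k - 1) = y ^ p - 1 := by
    intro y
    have : ∀ k ∈ Finset.range p, y * ζ ^ k - 1 = ζ ^ k * (y - (ζ⁻¹) ^ k) := by
      intro k _
      rw [inv_pow]
      field_simp
      try ring
    rw [Finset.prod_congr rfl this, Finset.prod_mul_distrib, hprodζ, one_mul,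
      prod_z_sub_pow hp0 hζinv]
  have hplus : ∏ k ∈ Finset.range p, (z * ζ ^ k + 1) = z ^ p + 1 := by
    have h1 : ∀ k ∈ Finset.range p, z * ζ ^ k + 1 = -1 * ((-z) * ζ ^ k - 1) := by
      intro k _; ring
    rw [Finset.prod_congr rfl h1, Finset.prod_mul_distrib, Finset.prod_const,
      Finset.card_range, hminus (-z), hodd.neg_one_pow, hodd.neg_pow]
    ring
  have hP : ∏ k ∈ Finset.range p,
      (Complex.exp (Complex.I * ((α : ℂ) + 2 * (k : ℂ) * (Real.pi : ℂ) / (p : ℂ))) + 1)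
      = w + 1 := by
    rw [Finset.prod_congr rfl (fun k _ => by rw [hterm k]), hplus, hzp]
  have hM : ∏ k ∈ Finset.range p,
      (Complex.exp (Complex.I * ((α : ℂ) + 2 * (k : ℂ) * (Real.pi : ℂ) / (p : ℂ))) - 1)
      = w - 1 := by
    rw [Finset.prod_congr rfl (fun k _ => by rw [hterm k]), hminus z, hzp]
  rw [hP, hM]
  constructor <;> ring
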